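/- Let H be a fixed finite-dimensional complex Hilbert space, let J be a finite index set, let p : J → ℝ be a probability distribution with p_i > 0 for all i ∈ J, and let each ρ̄_i be a density operator on H. Let ρ⃗ = {ρ_n} be the mixed source ρ_n = Σ_{i∈J} p_i ρ̄_i^{⊗n} on H^{⊗n}, let ρ⃗_i = {ρ̄_i^{⊗n}}, and let σ⃗ = {σ_n} be an arbitrary sequence of density operators on H^{⊗n}. Then D̲(ρ⃗‖σ⃗) ≤ min_{i∈J} D̲(ρ⃗_i‖σ⃗). -/

import Mathlib

open Filter Matrix
open scoped Classical ComplexOrder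

noncomputable section

section Defs

variable {ι : Type*} [Fintype ι] [DecidableEq ι]

/-- A density operator: a positive semidefinite operator with unit trace. -/
def IsDensityOp (A : Matrix ι ι ℂ) : Prop := A.PosSemidef ∧ A.trace = 1

/-- A test (POVM element): an operator `T` with `0 ≤ T ≤ I`. -/
def IsTest (T : Matrix ι ι ℂ) : Prop :=
  T.PosSemidef ∧ ((1 : Matrix ι ι ℂ) - T).PosSemidef

/-- An orthogonal projection: a Hermitian idempotent operator. -/
def IsOrthProj (P : Matrix ι ι ℂ) : Prop := P.IsHermitian ∧ P * P = P

/-- The orthogonal projection `{X ≥ 0}` onto the direct sum of eigenspaces of a Hermitian `X`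
with nonnegative eigenvalues (junk value `0` if `X` is not Hermitian). -/
def nnProj (X : Matrix ι ι ℂ) : Matrix ι ι ℂ :=
  if hX : X.IsHermitian then
    (hX.eigenvectorUnitary : Matrix ι ι ℂ) *
      (Matrix.diagonal fun i => if 0 ≤ hX.eigenvalues i then (1 : ℂ) else 0) *
      star (hX.eigenvectorUnitary : Matrix ι ι ℂ)
  else 0

/-- The type-I error `Tr[(I - {ρ - μ σ ≥ 0}) ρ]` of the spectral test. -/
def specErr (ρ σ : Matrix ι ι ℂ) (μ : ℝ) : ℝ :=
  (((1 : Matrix ι ι ℂ) - nnProj (ρ - (μ : ℂ) • σ)) * ρ).trace.re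

/-- Optimal ε-achievable type-II error `β_ε(ρ‖S)` against a set `S` of states. -/
def betaSet (ε : ℝ) (ρ : Matrix ι ι ℂ) (S : Set (Matrix ι ι ℂ)) : ℝ :=
  sInf {x : ℝ | ∃ T : Matrix ι ι ℂ, IsTest T ∧
    (((1 : Matrix ι ι ℂ) - T) * ρ).trace.re ≤ ε ∧
    x = sSup {y : ℝ | ∃ σ ∈ S, y = (T * σ).trace.re}}

/-- `log` of a Hermitian matrix via the functional calculus (with `Real.log 0 = 0`
on the kernel); junk value `0` if not Hermitian. -/
def hermLog (X : Matrix ι ι ℂ) : Matrix ι ι ℂ :=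
  if hX : X.IsHermitian then
    (hX.eigenvectorUnitary : Matrix ι ι ℂ) *
      (Matrix.diagonal fun i => (Real.log (hX.eigenvalues i) : ℂ)) *
      star (hX.eigenvectorUnitary : Matrix ι ι ℂ)
  else 0

/-- Support inclusion `supp ρ ⊆ supp σ`, expressed as kernel inclusion `ker σ ⊆ ker ρ`. -/
def SuppLE (ρ σ : Matrix ι ι ℂ) : Prop :=
  ∀ v : ι → ℂ, σ.mulVec v = 0 → ρ.mulVec v = 0

/-- Umegaki quantum relative entropy `D(ρ‖σ) = Tr[ρ(log ρ - log σ)]` if `supp ρ ⊆ supp σ`,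
and `+∞` otherwise. -/
def relEnt (ρ σ : Matrix ι ι ℂ) : EReal :=
  if SuppLE ρ σ then (((ρ * (hermLog ρ - hermLog σ)).trace.re : ℝ) : EReal) else ⊤

/-- The spectral projection of a Hermitian matrix onto the eigenspace of eigenvalue `μ`. -/
def eigProjAt (X : Matrix ι ι ℂ) (μ : ℝ) : Matrix ι ι ℂ :=
  if hX : X.IsHermitian then
    (hX.eigenvectorUnitary : Matrix ι ι ℂ) *
      (Matrix.diagonal fun i => if hX.eigenvalues i = μ then (1 : ℂ) else 0) *
      star (hX.eigenvectorUnitary : Matrix ι ι ℂ)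
  else 0

/-- The number of distinct eigenvalues of a Hermitian matrix. -/
def distinctEigCount (X : Matrix ι ι ℂ) : ℕ :=
  if hX : X.IsHermitian then (Finset.univ.image hX.eigenvalues).card else 0

/-- The pinching map with respect to `σ`: `ρ ↦ Σ_μ Π_μ ρ Π_μ` over the distinct
eigenvalues `μ` of `σ`. -/
def pinch (σ ρ : Matrix ι ι ℂ) : Matrix ι ι ℂ :=
  if hσ : σ.IsHermitian then
    ∑ μ ∈ Finset.univ.image hσ.eigenvalues, eigProjAt σ μ * ρ * eigProjAt σ μ
  else ρ

/-- The amplification `id_k ⊗ Φ` of a linear map on operators. -/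
def ampl (k : ℕ) (Φ : Matrix ι ι ℂ →ₗ[ℂ] Matrix ι ι ℂ)
    (M : Matrix (Fin k × ι) (Fin k × ι) ℂ) : Matrix (Fin k × ι) (Fin k × ι) ℂ :=
  Matrix.of fun p q => Φ (Matrix.of fun x y => M (p.1, x) (q.1, y)) p.2 q.2

/-- Complete positivity: every amplification `id_k ⊗ Φ` maps positive semidefinite
operators to positive semidefinite operators. -/
def IsCP (Φ : Matrix ι ι ℂ →ₗ[ℂ] Matrix ι ι ℂ) : Prop :=
  ∀ k : ℕ, ∀ M : Matrix (Fin k × ι) (Fin k × ι) ℂ, M.PosSemidef → (ampl k Φ M).PosSemidef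

/-- Trace preservation. -/
def IsTP (Φ : Matrix ι ι ℂ →ₗ[ℂ] Matrix ι ι ℂ) : Prop :=
  ∀ X : Matrix ι ι ℂ, (Φ X).trace = X.trace

end Defs

section SeqDefs

variable {Hn : ℕ → Type*} [∀ n, Fintype (Hn n)] [∀ n, DecidableEq (Hn n)]

/-- The spectral inf-divergence rate `D̲(ε|ρ⃗‖σ⃗)`. -/
def Dlow (ε : ℝ) (ρ σ : (n : ℕ) → Matrix (Hn n) (Hn n) ℂ) : EReal :=
  sSup ((fun a : ℝ => (a : EReal)) ''
    {a : ℝ | Filter.limsup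
      (fun n : ℕ => specErr (ρ n) (σ n) (Real.exp (n * a))) Filter.atTop ≤ ε})

/-- The supremum ε-achievable type-II error exponent `B(ε|ρ⃗‖σ⃗)`. -/
def Bexp (ε : ℝ) (ρ σ : (n : ℕ) → Matrix (Hn n) (Hn n) ℂ) : EReal :=
  sSup {x : EReal | ∃ T : (n : ℕ) → Matrix (Hn n) (Hn n) ℂ,
    (∀ n, IsTest (T n)) ∧
    Filter.limsup
      (fun n : ℕ => (((1 : Matrix (Hn n) (Hn n) ℂ) - T n) * ρ n).trace.re)
      Filter.atTop ≤ ε ∧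
    x = Filter.liminf
      (fun n : ℕ => ((↑(-(1 / (n : ℝ)) * Real.log ((T n * σ n).trace.re))) : EReal))
      Filter.atTop}

end SeqDefs

section TensorDefs

variable {H : Type*} [Fintype H] [DecidableEq H]

/-- The IID tensor power `A^{⊗n}`, acting on `H^{⊗n}` modeled with index type `Fin n → H`. -/
def tpow (A : Matrix H H ℂ) (n : ℕ) : Matrix (Fin n → H) (Fin n → H) ℂ :=
  Matrix.of fun x y => ∏ k : Fin n, A (x k) (y k)

/-- Tensor product of operators on `H^{⊗n}` and `H^{⊗m}`, as an operator on `H^{⊗(n+m)}`. -/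
def mTensor {n m : ℕ} (A : Matrix (Fin n → H) (Fin n → H) ℂ)
    (B : Matrix (Fin m → H) (Fin m → H) ℂ) :
    Matrix (Fin (n + m) → H) (Fin (n + m) → H) ℂ :=
  Matrix.of fun x y =>
    A (fun k => x (Fin.castAdd m k)) (fun k => y (Fin.castAdd m k)) *
      B (fun k => x (Fin.natAdd n k)) (fun k => y (Fin.natAdd n k))

end TensorDefs

/-- Classical spectral inf-divergence rate (with vanishing type-I error) for sequences of
(finitely supported) distributions on `ℕ`. -/
def cDlow (ρ σ : ℕ → ℕ → ℝ) : EReal :=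
  sSup ((fun a : ℝ => (a : EReal)) ''
    {a : ℝ | Filter.limsup
      (fun n : ℕ => ∑' x : ℕ, if ρ n x < Real.exp (n * a) * σ n x then ρ n x else 0)
      Filter.atTop = 0})
section StmtAux

variable {ι : Type*} [Fintype ι] [DecidableEq ι]

lemma psd_diag_re_nonneg {A : Matrix ι ι ℂ} (hA : A.PosSemidef) (i : ι) : 0 ≤ (A i i).re := by
  have h := hA.dotProduct_mulVec_nonneg (Pi.single i 1)
  have he : star (Pi.single i 1 : ι → ℂ) ⬝ᵥ A.mulVec (Pi.single i 1) = A i i := by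
    simp [dotProduct, Matrix.mulVec_single, Pi.single_apply,
      apply_ite (star : ℂ → ℂ), ite_mul]
  rw [he] at h
  exact (Complex.nonneg_iff.mp h).1

lemma psd_trace_re_nonneg {A : Matrix ι ι ℂ} (hA : A.PosSemidef) : 0 ≤ A.trace.re := by
  rw [Matrix.trace, Complex.re_sum]
  exact Finset.sum_nonneg fun i _ => psd_diag_re_nonneg hA i

lemma trace_mul_psd_re_nonneg {A B : Matrix ι ι ℂ} (hA : A.PosSemidef) (hB : B.PosSemidef) :
    0 ≤ (A * B).trace.re := by
  obtain ⟨C, rfl⟩ : ∃ C : Matrix ι ι ℂ, B = Cᴴ * C := by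
    open scoped MatrixOrder in
    obtain ⟨C, hC⟩ := CStarAlgebra.nonneg_iff_eq_star_mul_self.mp hB.nonneg
    exact ⟨C, by rw [hC, star_eq_conjTranspose]⟩
  have h : (A * (Cᴴ * C)).trace = (C * A * Cᴴ).trace := by
    rw [← Matrix.mul_assoc, Matrix.trace_mul_comm, Matrix.mul_assoc]
  rw [h]
  exact psd_trace_re_nonneg (hA.mul_mul_conjTranspose_same C)

section Spectral

variable {X : Matrix ι ι ℂ}

private abbrev Umat (hX : X.IsHermitian) : Matrix ι ι ℂ := (hX.eigenvectorUnitary : Matrix ι ι ℂ)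

private abbrev Emat (hX : X.IsHermitian) : Matrix ι ι ℂ :=
  Matrix.diagonal fun i => if 0 ≤ hX.eigenvalues i then (1 : ℂ) else 0

lemma Umat_mul_star (hX : X.IsHermitian) : Umat hX * star (Umat hX) = 1 :=
  Matrix.mem_unitaryGroup_iff.mp hX.eigenvectorUnitary.2

lemma star_mul_Umat (hX : X.IsHermitian) : star (Umat hX) * Umat hX = 1 :=
  Matrix.mem_unitaryGroup_iff'.mp hX.eigenvectorUnitary.2

lemma nnProj_eq (hX : X.IsHermitian) : nnProj X = Umat hX * Emat hX * star (Umat hX) := by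
  rw [nnProj, dif_pos hX]

lemma star_nnProj_conj (hX : X.IsHermitian) : star (Umat hX) * nnProj X * Umat hX = Emat hX := by
  rw [nnProj_eq hX, Matrix.mul_assoc, Matrix.mul_assoc, star_mul_Umat hX, Matrix.mul_one,
    ← Matrix.mul_assoc, star_mul_Umat hX, Matrix.one_mul]

lemma nnProj_isTest (hX : X.IsHermitian) : IsTest (nnProj X) := by
  constructor
  · rw [nnProj_eq hX]
    have hE : (Emat hX).PosSemidef := by
      refine Matrix.posSemidef_diagonal_iff.mpr fun i => ?_
      split <;> simp
    simpa [Matrix.star_eq_conjTranspose] using hE.mul_mul_conjTranspose_same (Umat hX)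
  · have h1 : (1 : Matrix ι ι ℂ) - nnProj X
        = Umat hX * ((1 : Matrix ι ι ℂ) - Emat hX) * star (Umat hX) := by
      rw [Matrix.mul_sub, Matrix.sub_mul, Matrix.mul_one, Umat_mul_star hX, nnProj_eq hX]
    rw [h1]
    have hE : ((1 : Matrix ι ι ℂ) - Emat hX).PosSemidef := by
      have : (1 : Matrix ι ι ℂ) - Emat hX
          = Matrix.diagonal fun i => 1 - (if 0 ≤ hX.eigenvalues i then (1 : ℂ) else 0) := by
        rw [← Matrix.diagonal_one, Matrix.diagonal_sub]
      rw [this]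
      refine Matrix.posSemidef_diagonal_iff.mpr fun i => ?_
      split <;> simp
    simpa [Matrix.star_eq_conjTranspose] using hE.mul_mul_conjTranspose_same (Umat hX)

lemma trace_mul_herm (hX : X.IsHermitian) (M : Matrix ι ι ℂ) :
    (M * X).trace = ∑ i, (star (Umat hX) * M * Umat hX) i i * (hX.eigenvalues i : ℂ) := by
  conv_lhs => rw [hX.spectral_theorem, Unitary.conjStarAlgAut_apply]
  have h : M * ((Umat hX) * Matrix.diagonal (RCLike.ofReal ∘ hX.eigenvalues) * star (Umat hX))
      = (M * Umat hX * Matrix.diagonal (RCLike.ofReal ∘ hX.eigenvalues)) * star (Umat hX) := by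
    simp [Matrix.mul_assoc]
  rw [h, Matrix.trace_mul_comm]
  rw [← Matrix.mul_assoc, ← Matrix.mul_assoc]
  rw [Matrix.trace]
  congr 1
  ext i
  simp [Matrix.diag, Matrix.mul_diagonal]

lemma conj_test_diag_re (hX : X.IsHermitian) {T : Matrix ι ι ℂ} (hT : IsTest T) (i : ι) :
    0 ≤ ((star (Umat hX) * T * Umat hX) i i).re ∧
      ((star (Umat hX) * T * Umat hX) i i).re ≤ 1 := by
  have h0 : (star (Umat hX) * T * Umat hX).PosSemidef := by
    simpa [Matrix.star_eq_conjTranspose] using hT.1.conjTranspose_mul_mul_same (Umat hX)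
  have h1 : ((1 : Matrix ι ι ℂ) - star (Umat hX) * T * Umat hX).PosSemidef := by
    have he : (1 : Matrix ι ι ℂ) - star (Umat hX) * T * Umat hX
        = star (Umat hX) * ((1 : Matrix ι ι ℂ) - T) * Umat hX := by
      rw [Matrix.mul_sub, Matrix.sub_mul, Matrix.mul_one, star_mul_Umat hX]
    rw [he]
    simpa [Matrix.star_eq_conjTranspose] using hT.2.conjTranspose_mul_mul_same (Umat hX)
  refine ⟨psd_diag_re_nonneg h0 i, ?_⟩
  have := psd_diag_re_nonneg h1 i
  simp only [Matrix.sub_apply, Matrix.one_apply_eq, Complex.sub_re, Complex.one_re] at this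
  linarith

lemma trace_nnProj_mul_herm (hX : X.IsHermitian) :
    ((nnProj X * X).trace).re = ∑ i, if 0 ≤ hX.eigenvalues i then hX.eigenvalues i else 0 := by
  rw [trace_mul_herm hX, Complex.re_sum]
  congr 1
  ext i
  rw [star_nnProj_conj hX]
  simp only [Matrix.diagonal_apply_eq]
  split <;> simp

lemma trace_nnProj_mul_herm_nonneg (hX : X.IsHermitian) : 0 ≤ ((nnProj X * X).trace).re := by
  rw [trace_nnProj_mul_herm hX]
  refine Finset.sum_nonneg fun i _ => ?_
  split <;> simp_all

lemma trace_test_mul_herm_le (hX : X.IsHermitian) {T : Matrix ι ι ℂ} (hT : IsTest T) :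
    ((T * X).trace).re ≤ ((nnProj X * X).trace).re := by
  rw [trace_nnProj_mul_herm hX, trace_mul_herm hX T, Complex.re_sum]
  refine Finset.sum_le_sum fun i _ => ?_
  obtain ⟨hc0, hc1⟩ := conj_test_diag_re hX hT i
  have hre : ((star (Umat hX) * T * Umat hX) i i * (hX.eigenvalues i : ℂ)).re
      = ((star (Umat hX) * T * Umat hX) i i).re * hX.eigenvalues i := by
    simp [Complex.mul_re, Complex.ofReal_re, Complex.ofReal_im]
  rw [hre]
  by_cases hd : 0 ≤ hX.eigenvalues i
  · simp only [if_pos hd]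
    nlinarith
  · simp only [if_neg hd]
    push_neg at hd
    nlinarith

end Spectral

lemma herm_real_smul {A : Matrix ι ι ℂ} (hA : A.IsHermitian) (r : ℝ) :
    ((r : ℂ) • A).IsHermitian := by
  unfold Matrix.IsHermitian
  rw [Matrix.conjTranspose_smul, Complex.star_def, Complex.conj_ofReal, hA.eq]

lemma trace_one_sub_mul_re (P M : Matrix ι ι ℂ) :
    ((((1 : Matrix ι ι ℂ) - P) * M).trace).re = M.trace.re - ((P * M).trace).re := by
  rw [Matrix.sub_mul, Matrix.one_mul, Matrix.trace_sub, Complex.sub_re]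

lemma trace_mul_sub_smul_re (P A B : Matrix ι ι ℂ) (r : ℝ) :
    ((P * (A - (r : ℂ) • B)).trace).re = ((P * A).trace).re - r * ((P * B).trace).re := by
  rw [Matrix.mul_sub, Matrix.mul_smul, Matrix.trace_sub, Matrix.trace_smul, Complex.sub_re,
    smul_eq_mul, Complex.re_ofReal_mul]

lemma real_smul_eq_coe_smul (r : ℝ) (A : Matrix ι ι ℂ) : r • A = (r : ℂ) • A := by
  ext i j
  simp [Complex.real_smul]

/-- Key single-letter inequality for the converse. -/
lemma key_ineq {ρ s τ : Matrix ι ι ℂ} (hρ : IsDensityOp ρ) (hs : IsDensityOp s)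
    (hτ : IsDensityOp τ) {c μ μ' : ℝ} (hc : 0 < c) (hμ : 0 < μ) (hμ' : 0 ≤ μ')
    (hsub : (ρ - (c : ℂ) • τ).PosSemidef) :
    specErr τ s μ' ≤ (1 / c) * specErr ρ s μ + μ' / μ := by
  have hρh : ρ.IsHermitian := hρ.1.1
  have hsh : s.IsHermitian := hs.1.1
  have hτh : τ.IsHermitian := hτ.1.1
  have hXh : (ρ - (μ : ℂ) • s).IsHermitian := hρh.sub (herm_real_smul hsh μ)
  have hX'h : (τ - (μ' : ℂ) • s).IsHermitian := hτh.sub (herm_real_smul hsh μ')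
  set P := nnProj (ρ - (μ : ℂ) • s) with hPdef
  set Q := nnProj (τ - (μ' : ℂ) • s) with hQdef
  have hPT : IsTest P := nnProj_isTest hXh
  have hQT : IsTest Q := nnProj_isTest hX'h
  have hρtr : ρ.trace.re = 1 := by rw [hρ.2]; simp
  have hτtr : τ.trace.re = 1 := by rw [hτ.2]; simp
  -- maximality of Q for X' = τ - μ' s
  have h1 : (P * τ).trace.re - μ' * (P * s).trace.re
      ≤ (Q * τ).trace.re - μ' * (Q * s).trace.re := by
    have h := trace_test_mul_herm_le hX'h hPT
    simp only [trace_mul_sub_smul_re] at h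
    rw [← hQdef] at h
    exact h
  -- nonnegativity facts
  have hqσ : 0 ≤ (Q * s).trace.re := trace_mul_psd_re_nonneg hQT.1 hs.1
  have hpσ : 0 ≤ (P * s).trace.re := trace_mul_psd_re_nonneg hPT.1 hs.1
  -- Tr[P X] ≥ 0 gives μ pσ ≤ pρ
  have h3 : μ * (P * s).trace.re ≤ (P * ρ).trace.re := by
    have h := trace_nnProj_mul_herm_nonneg hXh
    simp only [trace_mul_sub_smul_re] at h
    rw [← hPdef] at h
    linarith
  -- Tr[(1-P)ρ] ≥ 0 gives pρ ≤ 1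
  have h4 : (P * ρ).trace.re ≤ 1 := by
    have h := trace_mul_psd_re_nonneg hPT.2 hρ.1
    rw [trace_one_sub_mul_re, hρtr] at h
    linarith
  -- Tr[(1-P)(ρ - cτ)] ≥ 0 gives c(1 - pτ) ≤ 1 - pρ
  have h5 : c * (1 - (P * τ).trace.re) ≤ 1 - (P * ρ).trace.re := by
    have h := trace_mul_psd_re_nonneg hPT.2 hsub
    have he : ((((1 : Matrix ι ι ℂ) - P) * (ρ - (c : ℂ) • τ)).trace).re
        = (1 - (P * ρ).trace.re) - c * (1 - (P * τ).trace.re) := by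
      rw [trace_mul_sub_smul_re, trace_one_sub_mul_re, trace_one_sub_mul_re, hρtr, hτtr]
    rw [he] at h
    linarith
  -- specErr values
  have hspecτ : specErr τ s μ' = 1 - (Q * τ).trace.re := by
    rw [specErr, ← hQdef, trace_one_sub_mul_re, hτtr]
  have hspecρ : specErr ρ s μ = 1 - (P * ρ).trace.re := by
    rw [specErr, ← hPdef, trace_one_sub_mul_re, hρtr]
  rw [hspecτ, hspecρ]
  -- combine
  have h6 : 1 - (P * τ).trace.re ≤ (1 / c) * (1 - (P * ρ).trace.re) := by
    rw [one_div, inv_mul_eq_div, le_div_iff₀ hc]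
    linarith
  have h7 : (P * s).trace.re ≤ 1 / μ := by
    rw [le_div_iff₀ hμ]
    nlinarith
  have h8 : μ' * (P * s).trace.re ≤ μ' / μ := by
    have := mul_le_mul_of_nonneg_left h7 hμ'
    rwa [mul_one_div] at this
  have h9 : 0 ≤ μ' * (Q * s).trace.re := mul_nonneg hμ' hqσ
  linarith

section Tensor

variable {H : Type*} [Fintype H] [DecidableEq H]

lemma tpow_conj_mul (B : Matrix H H ℂ) (n : ℕ) :
    tpow (Bᴴ * B) n = (tpow B n)ᴴ * tpow B n := by
  ext x y
  have h1 : ∀ k : Fin n, (Bᴴ * B) (x k) (y k) = ∑ z, star (B z (x k)) * B z (y k) := by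
    intro k
    rw [Matrix.mul_apply]
    simp [Matrix.conjTranspose_apply]
  show (∏ k, (Bᴴ * B) (x k) (y k)) = ((tpow B n)ᴴ * tpow B n) x y
  simp only [h1, Matrix.mul_apply, Matrix.conjTranspose_apply, tpow, Matrix.of_apply, star_prod]
  rw [Finset.prod_univ_sum, ← Fintype.piFinset_univ]
  exact Finset.sum_congr rfl fun g _ => by rw [Finset.prod_mul_distrib]

lemma tpow_trace (A : Matrix H H ℂ) (n : ℕ) : (tpow A n).trace = A.trace ^ n := by
  have h := Finset.prod_univ_sum (fun _ : Fin n => (Finset.univ : Finset H)) (fun _ a => A a a)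
  rw [Fintype.piFinset_univ] at h
  simp only [Matrix.trace, Matrix.diag_apply, Matrix.diag, tpow, Matrix.of_apply]
  rw [← h, Finset.prod_const, Finset.card_univ, Fintype.card_fin]

lemma tpow_densityOp {A : Matrix H H ℂ} (hA : IsDensityOp A) (n : ℕ) :
    IsDensityOp (tpow A n) := by
  constructor
  · obtain ⟨B, hB⟩ : ∃ B : Matrix H H ℂ, A = Bᴴ * B := by
      open scoped MatrixOrder in
      obtain ⟨C, hC⟩ := CStarAlgebra.nonneg_iff_eq_star_mul_self.mp hA.1.nonneg
      exact ⟨C, by rw [hC, star_eq_conjTranspose]⟩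
    rw [hB, tpow_conj_mul]
    exact Matrix.posSemidef_conjTranspose_mul_self _
  · rw [tpow_trace, hA.2, one_pow]

end Tensor

lemma specErr_nonneg {ρ s : Matrix ι ι ℂ} (hρ : IsDensityOp ρ) (hs : IsDensityOp s) (μ : ℝ) :
    0 ≤ specErr ρ s μ := by
  have hX : (ρ - (μ : ℂ) • s).IsHermitian := hρ.1.1.sub (herm_real_smul hs.1.1 μ)
  exact trace_mul_psd_re_nonneg (nnProj_isTest hX).2 hρ.1

lemma specErr_le_one {ρ s : Matrix ι ι ℂ} (hρ : IsDensityOp ρ) (hs : IsDensityOp s) (μ : ℝ) :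
    specErr ρ s μ ≤ 1 := by
  have hX : (ρ - (μ : ℂ) • s).IsHermitian := hρ.1.1.sub (herm_real_smul hs.1.1 μ)
  have h := trace_mul_psd_re_nonneg (nnProj_isTest hX).1 hρ.1
  have hρtr : ρ.trace.re = 1 := by rw [hρ.2]; simp
  rw [specErr, trace_one_sub_mul_re, hρtr]
  linarith

lemma psd_add {A B : Matrix ι ι ℂ} (hA : A.PosSemidef) (hB : B.PosSemidef) :
    (A + B).PosSemidef := by
  refine ⟨hA.1.add hB.1, fun x => ?_⟩
  simpa [mul_add, add_mul] using add_nonneg (hA.2 x) (hB.2 x)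

lemma psd_smul_real {A : Matrix ι ι ℂ} (hA : A.PosSemidef) {r : ℝ} (hr : 0 ≤ r) :
    (r • A).PosSemidef := by
  rw [real_smul_eq_coe_smul]
  exact hA.smul (Complex.zero_le_real.mpr hr)

lemma psd_sum {J : Type*} (s : Finset J) (f : J → Matrix ι ι ℂ)
    (h : ∀ j ∈ s, (f j).PosSemidef) : (∑ j ∈ s, f j).PosSemidef :=
  Finset.sum_induction f Matrix.PosSemidef (fun _ _ ha hb => psd_add ha hb)
    Matrix.PosSemidef.zero h

end StmtAux

/-- **Converse part.** For the mixed source `ρ_n = Σ_i p_i ρ̄_i^{⊗n}` and an arbitrary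
sequence `σ⃗` of density operators, `D̲(ρ⃗‖σ⃗) ≤ min_i D̲(ρ⃗_i‖σ⃗)`. -/
theorem stmt3 {H : Type*} [Fintype H] [DecidableEq H]
    {J : Type*} [Fintype J]
    (p : J → ℝ) (hp : ∀ i, 0 < p i) (hpsum : ∑ i, p i = 1)
    (ρb : J → Matrix H H ℂ) (hρb : ∀ i, IsDensityOp (ρb i))
    (σ : (n : ℕ) → Matrix (Fin n → H) (Fin n → H) ℂ) (hσ : ∀ n, IsDensityOp (σ n)) :
    Dlow 0 (fun n => ∑ i, p i • tpow (ρb i) n) σ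
      ≤ ⨅ i : J, Dlow 0 (fun n => tpow (ρb i) n) σ := by
  classical
  -- density facts
  have htpow : ∀ (j : J) (n : ℕ), IsDensityOp (tpow (ρb j) n) := fun j n =>
    tpow_densityOp (hρb j) n
  have hmix : ∀ n, IsDensityOp (∑ j, p j • tpow (ρb j) n) := by
    intro n
    constructor
    · exact psd_sum _ _ fun j _ => psd_smul_real (htpow j n).1 (hp j).le
    · rw [Matrix.trace_sum]
      have he : ∀ j : J, (p j • tpow (ρb j) n).trace = ((p j : ℝ) : ℂ) := by
        intro j
        rw [Matrix.trace_smul, (htpow j n).2, Complex.real_smul, mul_one]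
      rw [Finset.sum_congr rfl fun j _ => he j, ← Complex.ofReal_sum, hpsum, Complex.ofReal_one]
  refine le_iInf fun i => ?_
  refine sSup_le ?_
  rintro x ⟨a, ha, rfl⟩
  simp only [Set.mem_setOf_eq] at ha
  by_contra hcon
  push_neg at hcon
  obtain ⟨a', h1, h2⟩ := EReal.exists_between_coe_real hcon
  have ha' : a' < a := EReal.coe_lt_coe_iff.mp h2
  refine absurd ?_ (not_le.mpr h1)
  refine le_sSup ⟨a', ?_, rfl⟩
  simp only [Set.mem_setOf_eq]
  -- type-I errors of the mixture test
  set f : ℕ → ℝ := fun n => specErr (∑ j, p j • tpow (ρb j) n) (σ n) (Real.exp (n * a)) with hf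
  have hf0 : ∀ n, 0 ≤ f n := fun n => specErr_nonneg (hmix n) (hσ n) _
  have hf1 : ∀ n, f n ≤ 1 := fun n => specErr_le_one (hmix n) (hσ n) _
  have hbdd : Filter.IsBoundedUnder (· ≤ ·) Filter.atTop f :=
    Filter.isBoundedUnder_of ⟨1, hf1⟩
  have hbdd' : Filter.IsBoundedUnder (· ≥ ·) Filter.atTop f :=
    Filter.isBoundedUnder_of ⟨0, hf0⟩
  have hftend : Filter.Tendsto f Filter.atTop (nhds 0) := by
    refine tendsto_of_le_liminf_of_limsup_le ?_ ha hbdd hbdd'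
    exact Filter.le_liminf_of_le hbdd.isCoboundedUnder_ge (Filter.Eventually.of_forall hf0)
  -- per-n bound for component i
  have hkey : ∀ n : ℕ, specErr (tpow (ρb i) n) (σ n) (Real.exp (n * a'))
      ≤ (1 / p i) * f n + Real.exp (a' - a) ^ n := by
    intro n
    have hsub : ((∑ j, p j • tpow (ρb j) n) - (p i : ℂ) • tpow (ρb i) n).PosSemidef := by
      have he : (∑ j, p j • tpow (ρb j) n) - (p i : ℂ) • tpow (ρb i) n
          = ∑ j ∈ Finset.univ.erase i, p j • tpow (ρb j) n := by
        rw [← real_smul_eq_coe_smul, ← Finset.add_sum_erase _ _ (Finset.mem_univ i),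
          add_sub_cancel_left]
      rw [he]
      exact psd_sum _ _ fun j _ => psd_smul_real (htpow j n).1 (hp j).le
    have h := key_ineq (hmix n) (hσ n) (htpow i n) (hp i) (Real.exp_pos ((n : ℝ) * a))
      (Real.exp_pos ((n : ℝ) * a')).le hsub
    have hq : Real.exp ((n : ℝ) * a') / Real.exp ((n : ℝ) * a) = Real.exp (a' - a) ^ n := by
      rw [← Real.exp_sub, ← mul_sub, Real.exp_nat_mul]
    rw [hq] at h
    exact h
  have htend2 : Filter.Tendsto (fun n : ℕ => (1 / p i) * f n + Real.exp (a' - a) ^ n)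
      Filter.atTop (nhds 0) := by
    have h1 := hftend.const_mul (1 / p i)
    have hlt1 : Real.exp (a' - a) < 1 := by
      rw [← Real.exp_zero]
      exact Real.exp_lt_exp.mpr (by linarith)
    have h2 := tendsto_pow_atTop_nhds_zero_of_lt_one (Real.exp_pos (a' - a)).le hlt1
    simpa using h1.add h2
  have hgtend : Filter.Tendsto
      (fun n : ℕ => specErr (tpow (ρb i) n) (σ n) (Real.exp (n * a')))
      Filter.atTop (nhds 0) :=
    squeeze_zero (fun n => specErr_nonneg (htpow i n) (hσ n) _) hkey htend2
  rw [hgtend.limsup_eq]
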